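/- Let a > 0 be real and let b ∈ ℂ with |b| < 1 and |a·b| < 1. Let s and r be the principal square roots of 1 - b² and 1 - a²b² respectively (both lie in the open right half-plane, so s and r are well-defined and nonzero). Set x₋ := b/s - a·b/r, y₊ := 1/s + 1/r, and M_n'(b) := (i/2)·[[x₋ - 2i, y₊], [-y₊, -x₋ - 2i]] ∈ M₂(ℂ). Then det M_n'(b) = 0 if and only if b = 0. -/

import Mathlib

open Complex

/-- The matrix `M_n'(b) = (i/2)·[[x₋ - 2i, y₊],[-y₊, -x₋ - 2i]]` with
`x₋ = b/s - ab/r` and `y₊ = 1/s + 1/r`. -/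
noncomputable def Mnp (a : ℝ) (b s r : ℂ) : Matrix (Fin 2) (Fin 2) ℂ :=
  (Complex.I / 2) •
    !![(b / s - (a : ℂ) * b / r) - 2 * Complex.I, 1 / s + 1 / r;
       -(1 / s + 1 / r), -(b / s - (a : ℂ) * b / r) - 2 * Complex.I]

lemma mnp_det (a : ℝ) (b s r : ℂ) (hs0 : s ≠ 0) (hr0 : r ≠ 0)
    (hs2 : s ^ 2 = 1 - b ^ 2) (hr2 : r ^ 2 = 1 - (a : ℂ) ^ 2 * b ^ 2) :
    (Mnp a b s r).det = (s * r - ((a:ℂ) * b ^ 2 + 1)) / (2 * (s * r)) := by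
  simp only [Mnp, Matrix.det_fin_two, Matrix.smul_apply, Matrix.cons_val', Matrix.cons_val_zero,
    Matrix.cons_val_one, Matrix.head_cons, Matrix.empty_val', Matrix.cons_val_fin_one,
    Matrix.head_fin_const, smul_eq_mul, Matrix.of_apply]
  field_simp
  linear_combination (2*r^2 + (a:ℂ)^2*b^2 - 1)*hs2 + (1 - b^2)*hr2 +
    (-(b * (r - s * (a:ℂ)))^2 + (r + s)^2 + 4*s^2*r^2*(Complex.I^2 - 1)) * Complex.I_sq

/-- for `a > 0`, `|b| < 1`, `|ab| < 1`, with `s`, `r` the principal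
square roots of `1 - b²` and `1 - a²b²` (the unique square roots with positive
real part), `det M_n'(b) = 0` if and only if `b = 0`. -/
theorem statement16 (a : ℝ) (ha : 0 < a) (b : ℂ)
    (hb : ‖b‖ < 1) (hab : ‖(a : ℂ) * b‖ < 1)
    (s r : ℂ)
    (hs2 : s ^ 2 = 1 - b ^ 2) (hsre : 0 < s.re)
    (hr2 : r ^ 2 = 1 - (a : ℂ) ^ 2 * b ^ 2) (hrre : 0 < r.re) :
    (Mnp a b s r).det = 0 ↔ b = 0 := by
  have hs0 : s ≠ 0 := fun h => by simp [h] at hsre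
  have hr0 : r ≠ 0 := fun h => by simp [h] at hrre
  rw [mnp_det a b s r hs0 hr0 hs2 hr2]
  rw [div_eq_zero_iff]
  constructor
  · rintro (h | h)
    · have key : b ^ 2 * ((a : ℂ) + 1) ^ 2 = 0 := by
        linear_combination (-(s * r + ((a:ℂ) * b ^ 2 + 1))) * h + r ^ 2 * hs2
          + (1 - b ^ 2) * hr2
      have ha1 : ((a : ℂ) + 1) ≠ 0 := by
        intro h'
        have := congrArg Complex.re h'
        simp at this
        linarith
      have hb2 : b ^ 2 = 0 := by
        rcases mul_eq_zero.mp key with h' | h'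
        · exact h'
        · exact absurd h' (pow_ne_zero _ ha1)
      exact pow_eq_zero_iff (n := 2) (by norm_num) |>.mp hb2
    · exact absurd h (by simp [hs0, hr0])
  · rintro rfl
    have hs1 : s = 1 := by
      have : (s - 1) * (s + 1) = 0 := by linear_combination hs2
      rcases mul_eq_zero.mp this with h | h
      · exact sub_eq_zero.mp h
      · exfalso
        have : s = -1 := eq_neg_of_add_eq_zero_left h
        rw [this] at hsre; norm_num at hsre
    have hr1 : r = 1 := by
      have : (r - 1) * (r + 1) = 0 := by linear_combination hr2
      rcases mul_eq_zero.mp this with h | h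
      · exact sub_eq_zero.mp h
      · exfalso
        have : r = -1 := eq_neg_of_add_eq_zero_left h
        rw [this] at hrre; norm_num at hrre
    left
    rw [hs1, hr1]; ring
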